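/- arXiv:1511.03998 — 2 statements merged into one kernel-verified Lean document; each statement's English description precedes it below -/
import Mathlib

section
/- For the N-qubit generalized W state |W⟩ = Σ_{i=1}^N a_i |0⟩^⊗(i−1)|1⟩|0⟩^⊗(N−i) with Σ|a_i|² = 1 and N ≥ 3, the generalized geometric measure equals min_i |a_i|². -/
open scoped BigOperators

noncomputable section

namespace QI

/-- A pure state of a collection of qubits indexed by `ι`, given by its
amplitudes in the computational basis. -/
abbrev PureState (ι : Type) := (ι → Fin 2) → ℂ

variable {ι : Type} [Fintype ι] [DecidableEq ι]

/-- Squared norm of a pure state. -/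
def nsq (ψ : PureState ι) : ℝ := ∑ x, Complex.normSq (ψ x)

/-- Normalization of a pure state. -/
def normalize (ψ : PureState ι) : PureState ι :=
  fun x => ψ x / (Real.sqrt (nsq ψ) : ℂ)

/-- Combine configurations of the qubits in `A` and outside `A`. -/
def merge (A : Finset ι) (a : {i // i ∈ A} → Fin 2) (b : {i // i ∉ A} → Fin 2) :
    ι → Fin 2 := fun i => if h : i ∈ A then a ⟨i, h⟩ else b ⟨i, h⟩

/-- Reduced density matrix of the qubits in `A`. -/
def rdm (ψ : PureState ι) (A : Finset ι) :
    ({i // i ∈ A} → Fin 2) → ({i // i ∈ A} → Fin 2) → ℂ :=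
  fun a a' => ∑ b : {i // i ∉ A} → Fin 2, ψ (merge A a b) * star (ψ (merge A a' b))

/-- Maximal eigenvalue of a (Hermitian) matrix, via the Rayleigh quotient. -/
def maxEig {κ : Type} [Fintype κ] (ρ : κ → κ → ℂ) : ℝ :=
  ⨆ v : {v : κ → ℂ // ∑ i, Complex.normSq (v i) = 1},
    (∑ i, ∑ j, star (v.1 i) * ρ i j * v.1 j).re

/-- The generalized geometric measure: one minus the maximal squared Schmidt
coefficient over all nonempty proper bipartitions. -/
def GGM (ψ : PureState ι) : ℝ :=
  1 - ⨆ A : {A : Finset ι // A.Nonempty ∧ A ≠ Finset.univ}, maxEig (rdm ψ A.1)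

/-- Unnormalized post-measurement state on the remaining qubits after obtaining
the outcome corresponding to the basis vector `ξ` in a rank-1 projective
measurement on qubit `r`. -/
def collapse (ψ : PureState ι) (r : ι) (ξ : Fin 2 → ℂ) :
    PureState {i // i ≠ r} :=
  fun b => ∑ v : Fin 2, ξ v * ψ (fun i => if h : i = r then v else b ⟨i, h⟩)

/-- First measurement-basis vector `cos(θ/2)|0⟩ + e^{iφ} sin(θ/2)|1⟩`. -/
def xiUp (θ φ : ℝ) : Fin 2 → ℂ :=
  ![(Real.cos (θ/2) : ℂ), Complex.exp (φ * Complex.I) * (Real.sin (θ/2) : ℂ)]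

/-- Second measurement-basis vector `-e^{-iφ} sin(θ/2)|0⟩ + cos(θ/2)|1⟩`. -/
def xiDn (θ φ : ℝ) : Fin 2 → ℂ :=
  ![-(Complex.exp (-(φ * Complex.I))) * (Real.sin (θ/2) : ℂ), (Real.cos (θ/2) : ℂ)]

/-- Average post-measurement GGM for the projective measurement `(θ, φ)` on
qubit `r`. -/
def avgGGM (ψ : PureState ι) (r : ι) (θ φ : ℝ) : ℝ :=
  nsq (collapse ψ r (xiUp θ φ)) * GGM (normalize (collapse ψ r (xiUp θ φ))) +
  nsq (collapse ψ r (xiDn θ φ)) * GGM (normalize (collapse ψ r (xiDn θ φ)))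

/-- The localizable generalized geometric measure for single-qubit projective
measurement on qubit `r`. -/
def LGGM (ψ : PureState ι) (r : ι) : ℝ :=
  sSup {E | ∃ θ ∈ Set.Icc 0 Real.pi, ∃ φ ∈ Set.Ico 0 (2 * Real.pi),
    E = avgGGM ψ r θ φ}

/-- The generalized GHZ state `a₁|0…0⟩ + a₂|1…1⟩`. -/
def ghz (a1 a2 : ℂ) : PureState ι :=
  fun x => if x = fun _ => 0 then a1 else if x = fun _ => 1 then a2 else 0

/-- Computational basis vector with a single `1` at position `i`. -/
def basisVec (i : ι) : ι → Fin 2 := fun j => if j = i then 1 else 0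

/-- The generalized W state `Σᵢ aᵢ |0…1ᵢ…0⟩`. -/
def wState (a : ι → ℂ) : PureState ι :=
  fun x => ∑ i, if x = basisVec i then a i else 0

/-- The Dicke state with `k` excitations: equal superposition of all
computational basis states with exactly `k` ones. -/
def dicke (k : ℕ) : PureState ι :=
  fun x => if (∑ i, ((x i : ℕ))) = k
    then ((1 / Real.sqrt ((Fintype.card ι).choose k) : ℝ) : ℂ) else 0


set_option linter.unusedSectionVars false
set_option maxHeartbeats 1000000

lemma basisVec_injective : Function.Injective (basisVec (ι := ι)) := by
  intro i j h
  have := congrFun h i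
  simp [basisVec] at this
  by_contra hne
  exact hne this

lemma basisVec_ne_zero (i : ι) : basisVec i ≠ (fun _ => 0) := by
  intro h
  have := congrFun h i
  simp [basisVec] at this

lemma merge_eq_basisVec_of_mem {A : Finset ι} {i : ι} (hi : i ∈ A)
    (c : {j // j ∈ A} → Fin 2) (b : {j // j ∉ A} → Fin 2) :
    merge A c b = basisVec i ↔ c = basisVec (⟨i, hi⟩ : {j // j ∈ A}) ∧ b = fun _ => 0 := by
  constructor
  · intro h
    constructor
    · funext ⟨j, hj⟩
      have := congrFun h j
      simp only [merge, dif_pos hj, basisVec] at this ⊢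
      rw [this]
      simp [Subtype.ext_iff]
    · funext ⟨j, hj⟩
      have := congrFun h j
      have hji : j ≠ i := fun e => hj (e ▸ hi)
      simp only [merge, dif_neg hj, basisVec, if_neg hji] at this
      exact this
  · rintro ⟨rfl, rfl⟩
    funext j
    by_cases hj : j ∈ A
    · simp only [merge, dif_pos hj, basisVec, Subtype.mk.injEq]
    · have hji : j ≠ i := fun e => hj (e ▸ hi)
      simp [merge, dif_neg hj, basisVec, hji]

lemma merge_eq_basisVec_of_not_mem {A : Finset ι} {i : ι} (hi : i ∉ A)
    (c : {j // j ∈ A} → Fin 2) (b : {j // j ∉ A} → Fin 2) :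
    merge A c b = basisVec i ↔ c = (fun _ => 0) ∧ b = basisVec (⟨i, hi⟩ : {j // j ∉ A}) := by
  constructor
  · intro h
    constructor
    · funext ⟨j, hj⟩
      have := congrFun h j
      have hji : j ≠ i := fun e => hi (e ▸ hj)
      simp only [merge, dif_pos hj, basisVec, if_neg hji] at this
      exact this
    · funext ⟨j, hj⟩
      have := congrFun h j
      simp only [merge, dif_neg hj, basisVec] at this ⊢
      rw [this]
      simp [Subtype.ext_iff]
  · rintro ⟨rfl, rfl⟩
    funext j
    by_cases hj : j ∈ A
    · have hji : j ≠ i := fun e => hi (e ▸ hj)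
      simp [merge, dif_pos hj, basisVec, hji]
    · simp only [merge, dif_neg hj, basisVec, Subtype.mk.injEq]


section helpers2
variable {κ κ' : Type} [Fintype κ] [Fintype κ'] [DecidableEq κ] [DecidableEq κ']

lemma sum_ite_inj (e : κ → κ') (he : Function.Injective e) (f : κ → ℂ) (k : κ) :
    (∑ k', if e k = e k' then f k' else 0) = f k := by
  simp [he.eq_iff, Finset.sum_ite_eq]

lemma sum_ite_notin (e : κ → κ') (f : κ → ℂ) (b : κ') (hb : ∀ k, b ≠ e k) :
    (∑ k', if b = e k' then f k' else 0) = 0 := by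
  apply Finset.sum_eq_zero
  intro k _
  rw [if_neg (hb k)]

lemma sum_comp_ind (e : κ → κ') (he : Function.Injective e) (f : κ → ℂ) (φ : ℂ → ℝ)
    (hφ : φ 0 = 0) :
    ∑ b, φ (∑ k, if b = e k then f k else 0) = ∑ k, φ (f k) := by
  have h1 : ∑ b, φ (∑ k, if b = e k then f k else 0)
      = ∑ b ∈ Finset.univ.image e, φ (∑ k, if b = e k then f k else 0) := by
    symm
    apply Finset.sum_subset (Finset.subset_univ _)
    intro b _ hb
    rw [sum_ite_notin e f b, hφ]
    intro k hk
    exact hb (Finset.mem_image.mpr ⟨k, Finset.mem_univ k, hk.symm⟩)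
  rw [h1, Finset.sum_image (fun x _ y _ h => he h)]
  apply Finset.sum_congr rfl
  intro k _
  rw [sum_ite_inj e he f k]

lemma sum_mul_ind (e : κ → κ') (he : Function.Injective e) (f : κ → ℂ) (w : κ' → ℂ) :
    ∑ b, w b * (∑ k, if b = e k then f k else 0) = ∑ k, w (e k) * f k := by
  simp_rw [Finset.mul_sum, mul_ite, mul_zero]
  rw [Finset.sum_comm]
  apply Finset.sum_congr rfl
  intro k _
  rw [Finset.sum_ite_eq' Finset.univ (e k) (fun b => w b * f k)]
  simp

end helpers2

lemma wState_merge (a : ι → ℂ) (A : Finset ι)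
    (c : {j // j ∈ A} → Fin 2) (b : {j // j ∉ A} → Fin 2) :
    wState a (merge A c b)
      = (if b = (fun _ => 0) then ∑ i : {j // j ∈ A}, (if c = basisVec i then a i.1 else 0) else 0)
        + (if c = (fun _ => 0) then ∑ k : {j // j ∉ A}, (if b = basisVec k then a k.1 else 0)
            else 0) := by
  unfold wState
  rw [← Finset.sum_add_sum_compl A]
  congr 1
  · rw [Finset.sum_subtype A (fun x => Iff.rfl)]
    by_cases hb : b = fun _ => 0
    · rw [if_pos hb]
      apply Finset.sum_congr rfl
      intro i _
      simp only [merge_eq_basisVec_of_mem i.2 c b]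
      simp [hb, Subtype.eta]
    · rw [if_neg hb]
      apply Finset.sum_eq_zero
      intro i _
      rw [if_neg]
      rw [merge_eq_basisVec_of_mem i.2 c b]
      rintro ⟨-, h⟩; exact hb h
  · rw [Finset.sum_subtype Aᶜ (fun x => Finset.mem_compl)]
    by_cases hc : c = fun _ => 0
    · rw [if_pos hc]
      apply Finset.sum_congr rfl
      intro i _
      simp only [merge_eq_basisVec_of_not_mem i.2 c b]
      simp [hc, Subtype.eta]
    · rw [if_neg hc]
      apply Finset.sum_eq_zero
      intro i _
      rw [if_neg]
      rw [merge_eq_basisVec_of_not_mem i.2 c b]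
      rintro ⟨h, -⟩; exact hc h

lemma quad_re (a : ι → ℂ) (A : Finset ι) (v : ({j // j ∈ A} → Fin 2) → ℂ) :
    (∑ i, ∑ j, star (v i) * rdm (wState a) A i j * v j).re
      = Complex.normSq (∑ i : {j // j ∈ A}, star (v (basisVec i)) * a i.1)
        + Complex.normSq (v (fun _ => 0)) * ∑ k : {j // j ∉ A}, Complex.normSq (a k.1) := by
  set g : ({j // j ∉ A} → Fin 2) → ℂ :=
    fun b => ∑ c, star (v c) * wState a (merge A c b) with hg
  have expand : ∀ b, g b * star (g b)
      = ∑ c, ∑ c', star (v c) * (wState a (merge A c b) * star (wState a (merge A c' b))) * v c' := by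
    intro b
    rw [hg]
    simp only [star_sum, Finset.sum_mul, Finset.mul_sum]
    rw [Finset.sum_comm]
    apply Finset.sum_congr rfl
    intro c _
    apply Finset.sum_congr rfl
    intro c' _
    simp only [star_mul', star_star]
    ring
  have step1 : (∑ i, ∑ j, star (v i) * rdm (wState a) A i j * v j)
      = ∑ b, g b * star (g b) := by
    have e1 : (∑ i, ∑ j, star (v i) * rdm (wState a) A i j * v j)
        = ∑ i, ∑ j, ∑ b, star (v i) * (wState a (merge A i b) * star (wState a (merge A j b))) * v j := by
      apply Finset.sum_congr rfl
      intro i _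
      apply Finset.sum_congr rfl
      intro j _
      rw [rdm, Finset.mul_sum, Finset.sum_mul]
    rw [e1]
    have e2 : ∀ i : {j // j ∈ A} → Fin 2,
        (∑ j, ∑ b, star (v i) * (wState a (merge A i b) * star (wState a (merge A j b))) * v j)
        = ∑ b, ∑ j, star (v i) * (wState a (merge A i b) * star (wState a (merge A j b))) * v j :=
      fun i => Finset.sum_comm
    simp_rw [e2]
    rw [Finset.sum_comm]
    apply Finset.sum_congr rfl
    intro b _
    rw [expand b]
  rw [step1]
  have step2 : (∑ b, g b * star (g b)).re = ∑ b, Complex.normSq (g b) := by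
    rw [Complex.re_sum]
    apply Finset.sum_congr rfl
    intro b _
    rw [Complex.star_def, Complex.mul_conj, Complex.ofReal_re]
  rw [step2]
  set X : ℂ := ∑ i : {j // j ∈ A}, star (v (basisVec i)) * a i.1 with hX
  set G : ({j // j ∉ A} → Fin 2) → ℂ :=
    fun b => ∑ k : {j // j ∉ A}, if b = basisVec k then a k.1 else 0 with hG
  have gcomp : ∀ b, g b = (if b = (fun _ => 0) then X else 0) + star (v (fun _ => 0)) * G b := by
    intro b
    rw [hg]
    simp only
    simp_rw [wState_merge a A _ b, mul_add]
    rw [Finset.sum_add_distrib]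
    congr 1
    · by_cases hb : b = fun _ => 0
      · subst hb
        rw [if_pos rfl]
        have := sum_mul_ind (κ := {j // j ∈ A}) basisVec basisVec_injective
          (fun i => a i.1) (fun c => star (v c))
        simp only [eq_self_iff_true, if_true]
        exact this
      · rw [if_neg hb]
        simp only [if_neg hb, mul_zero]
        exact Finset.sum_const_zero
    · simp_rw [mul_ite, mul_zero]
      rw [Finset.sum_ite_eq' Finset.univ (fun _ => (0 : Fin 2))
        (fun c => star (v c) * G b)]
      simp
  have hG0 : G (fun _ => 0) = 0 := by
    have h := sum_ite_notin (κ := {j // j ∉ A}) basisVec (fun k => a k.1)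
      (fun _ => 0) (fun k => (basisVec_ne_zero k).symm)
    rw [hG]
    exact h
  have hsumG : ∑ b, Complex.normSq (G b) = ∑ k : {j // j ∉ A}, Complex.normSq (a k.1) := by
    have h := sum_comp_ind (κ := {j // j ∉ A}) basisVec basisVec_injective
      (fun k => a k.1) Complex.normSq Complex.normSq_zero
    rw [hG]
    exact h
  simp_rw [gcomp]
  have point : ∀ b : {j // j ∉ A} → Fin 2,
      Complex.normSq ((if b = (fun _ => 0) then X else 0) + star (v (fun _ => 0)) * G b)
      = (if b = (fun _ => 0) then Complex.normSq X else 0)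
        + Complex.normSq (v (fun _ => 0)) * Complex.normSq (G b) := by
    intro b
    by_cases hb : b = fun _ => 0
    · subst hb
      rw [if_pos rfl, if_pos rfl, hG0, mul_zero, add_zero, Complex.normSq_zero, mul_zero,
        add_zero]
    · rw [if_neg hb, if_neg hb, zero_add, zero_add, Complex.normSq_mul, Complex.star_def,
        Complex.normSq_conj]
  simp_rw [point]
  rw [Finset.sum_add_distrib, ← Finset.mul_sum, hsumG,
    Finset.sum_ite_eq' Finset.univ (fun _ => (0 : Fin 2)) (fun _ => Complex.normSq X)]
  simp



lemma normSq_sum_mul_le {κ : Type} [Fintype κ] (f g : κ → ℂ) :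
    Complex.normSq (∑ i, f i * g i)
      ≤ (∑ i, Complex.normSq (f i)) * ∑ i, Complex.normSq (g i) := by
  have h1 : ‖∑ i, f i * g i‖ ≤ ∑ i, ‖f i‖ * ‖g i‖ := by
    refine (norm_sum_le Finset.univ (fun i => f i * g i)).trans ?_
    simp [norm_mul]
  calc Complex.normSq (∑ i, f i * g i) = (‖∑ i, f i * g i‖) ^ 2 := by
        rw [Complex.sq_norm]
    _ ≤ (∑ i, ‖f i‖ * ‖g i‖) ^ 2 := by
        apply pow_le_pow_left₀ (norm_nonneg _) h1
    _ ≤ (∑ i, (‖f i‖) ^ 2) * ∑ i, (‖g i‖) ^ 2 :=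
        Finset.sum_mul_sq_le_sq_mul_sq _ _ _
    _ = (∑ i, Complex.normSq (f i)) * ∑ i, Complex.normSq (g i) := by
        simp [Complex.sq_norm]

lemma sum_split (A : Finset ι) (f : ι → ℝ) :
    ∑ i, f i = (∑ i : {j // j ∈ A}, f i.1) + ∑ k : {j // j ∉ A}, f k.1 := by
  rw [← Finset.sum_add_sum_compl A, Finset.sum_subtype A (fun _ => Iff.rfl) f,
    Finset.sum_subtype Aᶜ (fun _ => Finset.mem_compl) f]

lemma bessel (A : Finset ι) (v : ({j // j ∈ A} → Fin 2) → ℂ)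
    (hv : ∑ c, Complex.normSq (v c) = 1) :
    (∑ i : {j // j ∈ A}, Complex.normSq (v (basisVec i)))
      + Complex.normSq (v (fun _ => 0)) ≤ 1 := by
  classical
  set s : Finset ({j // j ∈ A} → Fin 2) :=
    insert (fun _ => 0) (Finset.univ.image basisVec) with hs
  have h0 : (fun _ : {j // j ∈ A} => (0 : Fin 2)) ∉ Finset.univ.image basisVec := by
    simp only [Finset.mem_image, not_exists]
    intro i
    rintro ⟨-, h⟩
    exact basisVec_ne_zero i h
  have h1 : ∑ c ∈ s, Complex.normSq (v c)
      = Complex.normSq (v (fun _ => 0))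
        + ∑ i : {j // j ∈ A}, Complex.normSq (v (basisVec i)) := by
    rw [hs, Finset.sum_insert h0, Finset.sum_image (fun x _ y _ h => basisVec_injective h)]
  have h2 : ∑ c ∈ s, Complex.normSq (v c) ≤ ∑ c, Complex.normSq (v c) :=
    Finset.sum_le_sum_of_subset_of_nonneg (Finset.subset_univ s)
      (fun c _ _ => Complex.normSq_nonneg _)
  rw [hv] at h2
  rw [h1] at h2
  linarith

/-- The unit-vector subtype is nonempty. -/
instance unitNonempty {κ : Type} [Fintype κ] [DecidableEq κ] [Nonempty κ] :
    Nonempty {v : κ → ℂ // ∑ i, Complex.normSq (v i) = 1} := by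
  classical
  obtain ⟨c₀⟩ := ‹Nonempty κ›
  refine ⟨⟨fun c => if c = c₀ then 1 else 0, ?_⟩⟩
  have : ∀ c, Complex.normSq (if c = c₀ then (1:ℂ) else 0)
      = if c = c₀ then (1:ℝ) else 0 := by
    intro c; split_ifs <;> simp
  simp only
  rw [Finset.sum_congr rfl (fun c _ => this c),
    Finset.sum_ite_eq' Finset.univ c₀ (fun _ => (1 : ℝ))]
  simp

lemma maxEig_le {κ : Type} [Fintype κ] [DecidableEq κ] [Nonempty κ] (ρ : κ → κ → ℂ) (c : ℝ)
    (hc : ∀ v : {v : κ → ℂ // ∑ i, Complex.normSq (v i) = 1},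
      (∑ i, ∑ j, star (v.1 i) * ρ i j * v.1 j).re ≤ c) :
    maxEig ρ ≤ c :=
  ciSup_le hc

lemma le_maxEig {κ : Type} [Fintype κ] [DecidableEq κ] (ρ : κ → κ → ℂ) (c : ℝ)
    (hc : ∀ v : {v : κ → ℂ // ∑ i, Complex.normSq (v i) = 1},
      (∑ i, ∑ j, star (v.1 i) * ρ i j * v.1 j).re ≤ c)
    (v : {v : κ → ℂ // ∑ i, Complex.normSq (v i) = 1}) :
    (∑ i, ∑ j, star (v.1 i) * ρ i j * v.1 j).re ≤ maxEig ρ :=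
  le_ciSup ⟨c, Set.forall_mem_range.mpr hc⟩ v


lemma quad_bound (a : ι → ℂ) (h : ∑ i, Complex.normSq (a i) = 1) (m : ℝ)
    (hm : ∀ j, m ≤ Complex.normSq (a j)) (hm0 : 0 ≤ m)
    (A : Finset ι) (hA : A.Nonempty) (hA' : A ≠ Finset.univ)
    (v : {v : ({j // j ∈ A} → Fin 2) → ℂ // ∑ i, Complex.normSq (v i) = 1}) :
    (∑ i, ∑ j, star (v.1 i) * rdm (wState a) A i j * v.1 j).re ≤ 1 - m := by
  rw [quad_re a A v.1]
  set SA := ∑ i : {j // j ∈ A}, Complex.normSq (a i.1) with hSAdef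
  set SB := ∑ k : {j // j ∉ A}, Complex.normSq (a k.1) with hSBdef
  set T := ∑ i : {j // j ∈ A}, Complex.normSq (v.1 (basisVec i)) with hTdef
  have hS : SA + SB = 1 := by
    rw [hSAdef, hSBdef, ← h]
    exact (sum_split A (fun i => Complex.normSq (a i))).symm
  have hT : T + Complex.normSq (v.1 (fun _ => 0)) ≤ 1 := bessel A v.1 v.2
  have hCS : Complex.normSq (∑ i : {j // j ∈ A}, star (v.1 (basisVec i)) * a i.1)
      ≤ T * SA := by
    have hb := normSq_sum_mul_le (fun i : {j // j ∈ A} => star (v.1 (basisVec i)))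
      (fun i : {j // j ∈ A} => a i.1)
    simp only [Complex.star_def, Complex.normSq_conj] at hb
    exact hb
  have hSA : m ≤ SA := by
    obtain ⟨i₁, hi₁⟩ := hA
    have h1 : Complex.normSq (a i₁) ≤ SA :=
      Finset.single_le_sum (f := fun i : {j // j ∈ A} => Complex.normSq (a i.1))
        (fun i _ => Complex.normSq_nonneg _) (Finset.mem_univ ⟨i₁, hi₁⟩)
    exact (hm i₁).trans h1
  have hSB : m ≤ SB := by
    have hk : ∃ k, k ∉ A := by
      by_contra h'
      push_neg at h'
      exact hA' (Finset.eq_univ_iff_forall.mpr h')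
    obtain ⟨k₁, hk₁⟩ := hk
    have h1 : Complex.normSq (a k₁) ≤ SB :=
      Finset.single_le_sum (f := fun k : {j // j ∉ A} => Complex.normSq (a k.1))
        (fun k _ => Complex.normSq_nonneg _) (Finset.mem_univ ⟨k₁, hk₁⟩)
    exact (hm k₁).trans h1
  have hT0 : 0 ≤ T := Finset.sum_nonneg (fun i _ => Complex.normSq_nonneg _)
  have hv0 : 0 ≤ Complex.normSq (v.1 (fun _ => 0)) := Complex.normSq_nonneg _
  have e1 : T * SA ≤ T * (1 - m) := by
    apply mul_le_mul_of_nonneg_left _ hT0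
    linarith
  have e2 : Complex.normSq (v.1 (fun _ => 0)) * SB
      ≤ Complex.normSq (v.1 (fun _ => 0)) * (1 - m) := by
    apply mul_le_mul_of_nonneg_left _ hv0
    linarith
  have e3 : (T + Complex.normSq (v.1 (fun _ => 0))) * (1 - m) ≤ 1 * (1 - m) := by
    apply mul_le_mul_of_nonneg_right hT
    linarith
  nlinarith

lemma quad_attain (a : ι → ℂ) (A : Finset ι)
    (hpos : 0 < ∑ i : {j // j ∈ A}, Complex.normSq (a i.1)) :
    ∃ v : {v : ({j // j ∈ A} → Fin 2) → ℂ // ∑ i, Complex.normSq (v i) = 1},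
      (∑ i, ∑ j, star (v.1 i) * rdm (wState a) A i j * v.1 j).re
        = ∑ i : {j // j ∈ A}, Complex.normSq (a i.1) := by
  classical
  set SA := ∑ i : {j // j ∈ A}, Complex.normSq (a i.1) with hSAdef
  set num : ({j // j ∈ A} → Fin 2) → ℂ :=
    fun c => ∑ i : {j // j ∈ A}, if c = basisVec i then a i.1 else 0 with hnum
  set w : ({j // j ∈ A} → Fin 2) → ℂ := fun c => num c / (Real.sqrt SA : ℂ) with hw
  have hsqrt : ((Real.sqrt SA : ℝ) : ℂ) ≠ 0 := by
    simp only [ne_eq, Complex.ofReal_eq_zero]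
    exact (Real.sqrt_pos.mpr hpos).ne'
  have hnormsqrt : Complex.normSq ((Real.sqrt SA : ℝ) : ℂ) = SA := by
    rw [Complex.normSq_ofReal, Real.mul_self_sqrt hpos.le]
  have hsum : ∑ c, Complex.normSq (num c) = SA := by
    rw [hnum]
    exact sum_comp_ind (κ := {j // j ∈ A}) basisVec basisVec_injective
      (fun i => a i.1) Complex.normSq Complex.normSq_zero
  have hunit : ∑ c, Complex.normSq (w c) = 1 := by
    rw [hw]
    simp only [Complex.normSq_div, hnormsqrt]
    rw [← Finset.sum_div, hsum, div_self hpos.ne']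
  refine ⟨⟨w, hunit⟩, ?_⟩
  rw [quad_re a A w]
  have hw0 : w (fun _ => 0) = 0 := by
    have h0 := sum_ite_notin (κ := {j // j ∈ A}) basisVec (fun k => a k.1)
      (fun _ => 0) (fun k => (basisVec_ne_zero k).symm)
    rw [hw]
    simp only
    rw [hnum]
    simp only
    rw [h0, zero_div]
  have hwb : ∀ i : {j // j ∈ A}, w (basisVec i) = a i.1 / (Real.sqrt SA : ℂ) := by
    intro i
    have hi := sum_ite_inj (κ := {j // j ∈ A}) basisVec basisVec_injective
      (fun k => a k.1) i
    rw [hw]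
    simp only
    rw [hnum]
    simp only
    rw [hi]
  have hX : (∑ i : {j // j ∈ A}, star (w (basisVec i)) * a i.1)
      = (SA : ℂ) / (Real.sqrt SA : ℂ) := by
    have : ∀ i : {j // j ∈ A}, star (w (basisVec i)) * a i.1
        = ((Complex.normSq (a i.1) : ℝ) : ℂ) / (Real.sqrt SA : ℂ) := by
      intro i
      rw [hwb i, Complex.star_def, map_div₀, Complex.conj_ofReal, div_mul_eq_mul_div,
        ← Complex.normSq_eq_conj_mul_self]
    rw [Finset.sum_congr rfl (fun i _ => this i), ← Finset.sum_div]
    congr 1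
    rw [← Complex.ofReal_sum]
  rw [hX, hw0, Complex.normSq_zero, zero_mul, add_zero]
  rw [Complex.normSq_div, hnormsqrt, Complex.normSq_ofReal]
  field_simp

/-- For the `N`-qubit generalized W state (`N ≥ 3`) with `Σᵢ |aᵢ|² = 1`,
the generalized geometric measure equals `minᵢ |aᵢ|²`. -/
theorem stmt3 (N : ℕ) (hN : 3 ≤ N) (a : Fin N → ℂ)
    (h : ∑ i, Complex.normSq (a i) = 1) :
    GGM (wState a) = ⨅ i, Complex.normSq (a i) := by
  classical
  have hNpos : 0 < N := by omega
  have hne : (Finset.univ : Finset (Fin N)).Nonempty := ⟨⟨0, hNpos⟩, Finset.mem_univ _⟩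
  obtain ⟨i₀, -, hi₀⟩ := Finset.exists_min_image Finset.univ
    (fun i => Complex.normSq (a i)) hne
  set m := Complex.normSq (a i₀) with hmdef
  have hm : ∀ j, m ≤ Complex.normSq (a j) := fun j => hi₀ j (Finset.mem_univ j)
  have hm0 : 0 ≤ m := Complex.normSq_nonneg _
  have hmN : (N : ℝ) * m ≤ 1 := by
    have h1 : Finset.univ.card • m ≤ ∑ i, Complex.normSq (a i) :=
      Finset.card_nsmul_le_sum Finset.univ (fun i => Complex.normSq (a i)) m
        (fun i _ => hm i)
    rw [h] at h1
    simpa [nsmul_eq_mul] using h1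
  have hN3 : (3 : ℝ) ≤ (N : ℝ) := by exact_mod_cast hN
  have hmlt : m < 1 := by nlinarith
  haveI : Nonempty (Fin N) := ⟨⟨0, hNpos⟩⟩
  have hinf : ⨅ i, Complex.normSq (a i) = m := by
    apply le_antisymm
    · exact ciInf_le (Set.finite_range _).bddBelow i₀
    · exact le_ciInf hm
  rw [hinf, GGM]
  set Astar : Finset (Fin N) := ({i₀} : Finset (Fin N))ᶜ with hAstardef
  have hAstar_ne : Astar.Nonempty := by
    rw [← Finset.card_pos, hAstardef, Finset.card_compl, Finset.card_singleton]
    simp only [Fintype.card_fin]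
    omega
  have hAstar_prop : Astar ≠ Finset.univ := by
    intro hcontra
    have : i₀ ∈ Astar := hcontra ▸ Finset.mem_univ i₀
    rw [hAstardef, Finset.mem_compl, Finset.mem_singleton] at this
    exact this rfl
  haveI : Nonempty {A : Finset (Fin N) // A.Nonempty ∧ A ≠ Finset.univ} :=
    ⟨⟨Astar, hAstar_ne, hAstar_prop⟩⟩
  have hsup : (⨆ A : {A : Finset (Fin N) // A.Nonempty ∧ A ≠ Finset.univ},
      maxEig (rdm (wState a) A.1)) = 1 - m := by
    apply le_antisymm
    · apply ciSup_le
      intro A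
      exact maxEig_le _ (1 - m) (fun v => quad_bound a h m hm hm0 A.1 A.2.1 A.2.2 v)
    · have hSAstar : ∑ i : {j // j ∈ Astar}, Complex.normSq (a i.1) = 1 - m := by
        have hsplit := sum_split Astar (fun i => Complex.normSq (a i))
        rw [h] at hsplit
        have hout : ∑ k : {j // j ∉ Astar}, Complex.normSq (a k.1) = m := by
          have e1 : ∑ k : {j // j ∉ Astar}, Complex.normSq (a k.1)
              = ∑ j ∈ Astarᶜ, Complex.normSq (a j) :=
            (Finset.sum_subtype Astarᶜ (fun x => Finset.mem_compl)
              (fun j => Complex.normSq (a j))).symm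
          rw [e1, hAstardef, compl_compl, Finset.sum_singleton]
        rw [hout] at hsplit
        linarith
      have hpos : 0 < ∑ i : {j // j ∈ Astar}, Complex.normSq (a i.1) := by
        rw [hSAstar]; linarith
      obtain ⟨v, hv⟩ := quad_attain a Astar hpos
      have h1 : 1 - m ≤ maxEig (rdm (wState a) Astar) := by
        have h2 := le_maxEig (rdm (wState a) Astar) (1 - m)
          (fun v' => quad_bound a h m hm hm0 Astar hAstar_ne hAstar_prop v') v
        rw [hv, hSAstar] at h2
        exact h2
      exact h1.trans (le_ciSup
        (f := fun A : {A : Finset (Fin N) // A.Nonempty ∧ A ≠ Finset.univ} =>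
          maxEig (rdm (wState a) A.1))
        (Set.finite_range _).bddAbove ⟨Astar, hAstar_ne, hAstar_prop⟩)
  rw [hsup]
  ring

end QI
end
end

section
/- Let a₁ ∈ ℂ with |a₁|² ≥ 1/2 and a₂ = complex number with |a₁|² + |a₂|² = 1. After a rank-1 projective measurement in basis {cos(θ/2)|0⟩ + e^{iφ}sin(θ/2)|1⟩, −e^{−iφ}sin(θ/2)|0⟩ + cos(θ/2)|1⟩} on the first qubit of the N-qubit generalized GHZ state, the average GGM of the post-measurement (N−1)-qubit states satisfies Σ_l p^l G(|ψ^l⟩) = 1 − max{|a₁|², cos²(θ/2), sin²(θ/2)}, where p¹ = |a₁|²cos²(θ/2) + |a₂|²sin²(θ/2), p² = |a₁|²sin²(θ/2) + |a₂|²cos²(θ/2), and each |ψ^l⟩ is an (N−1)-qubit generalized GHZ state. -/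
open scoped BigOperators

noncomputable section

namespace QI

variable {ι : Type} [Fintype ι] [DecidableEq ι]

section Aux
set_option linter.unusedSectionVars false


lemma maxEig_diag {κ : Type} [Fintype κ] [DecidableEq κ] [Nonempty κ] (d : κ → ℝ) :
    maxEig (fun i j => if i = j then (d i : ℂ) else 0)
      = Finset.univ.sup' Finset.univ_nonempty d := by
  have hform : ∀ v : κ → ℂ,
      (∑ i, ∑ j, star (v i) * (if i = j then (d i : ℂ) else 0) * v j).re
        = ∑ i, d i * Complex.normSq (v i) := by
    intro v
    have : ∀ i, (∑ j, star (v i) * (if i = j then (d i : ℂ) else 0) * v j)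
        = (d i : ℂ) * (Complex.normSq (v i) : ℂ) := by
      intro i
      rw [Finset.sum_eq_single i]
      · rw [if_pos rfl]
        rw [show star (v i) * (d i : ℂ) * v i
            = (d i : ℂ) * (v i * (starRingEnd ℂ) (v i)) by
              simp only [RCLike.star_def]; ring, Complex.mul_conj]
      · intro j _ hj
        rw [if_neg (Ne.symm hj)]; ring
      · intro h; exact absurd (Finset.mem_univ i) h
    rw [Finset.sum_congr rfl fun i _ => this i, Complex.re_sum]
    apply Finset.sum_congr rfl
    intro i _
    simp [← Complex.ofReal_mul]
  have hdelta : ∀ j : κ, (∑ i, Complex.normSq ((fun i => if i = j then (1:ℂ) else 0) i)) = 1 := by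
    intro j
    simp [apply_ite Complex.normSq, Finset.sum_ite_eq']
  have hub : ∀ v : {v : κ → ℂ // ∑ i, Complex.normSq (v i) = 1},
      (∑ i, ∑ j, star (v.1 i) * (if i = j then (d i : ℂ) else 0) * v.1 j).re
        ≤ Finset.univ.sup' Finset.univ_nonempty d := by
    intro v
    rw [hform]
    calc ∑ i, d i * Complex.normSq (v.1 i)
        ≤ ∑ i, (Finset.univ.sup' Finset.univ_nonempty d) * Complex.normSq (v.1 i) := by
          apply Finset.sum_le_sum
          intro i _
          exact mul_le_mul_of_nonneg_right (Finset.le_sup' d (Finset.mem_univ i))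
            (Complex.normSq_nonneg _)
      _ = Finset.univ.sup' Finset.univ_nonempty d := by
          rw [← Finset.mul_sum, v.2, mul_one]
  haveI : Nonempty {v : κ → ℂ // ∑ i, Complex.normSq (v i) = 1} :=
    ⟨⟨fun i => if i = Classical.arbitrary κ then (1:ℂ) else 0, hdelta _⟩⟩
  apply le_antisymm
  · exact ciSup_le hub
  · apply Finset.sup'_le
    intro j _
    have := le_ciSup ⟨_, fun x hx => by obtain ⟨v, rfl⟩ := hx; exact hub v⟩
      (⟨fun i => if i = j then (1:ℂ) else 0, hdelta j⟩ :
        {v : κ → ℂ // ∑ i, Complex.normSq (v i) = 1})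
    refine le_trans ?_ this
    rw [hform]
    simp [apply_ite Complex.normSq, mul_ite, Finset.sum_ite_eq']

lemma const_ne_const {α : Type} [Nonempty α] :
    (fun _ : α => (0 : Fin 2)) ≠ (fun _ => 1) := by
  intro h
  have := congrFun h (Classical.arbitrary α)
  simp at this

lemma merge_eq_const (A : Finset ι) (a : {i // i ∈ A} → Fin 2)
    (b : {i // i ∉ A} → Fin 2) (c : Fin 2) :
    merge A a b = (fun _ => c) ↔ (a = fun _ => c) ∧ (b = fun _ => c) := by
  constructor
  · intro h
    constructor
    · funext i
      have := congrFun h i.1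
      simpa [merge, i.2] using this
    · funext i
      have := congrFun h i.1
      simpa [merge, i.2] using this
  · rintro ⟨h1, h2⟩
    funext i
    by_cases hi : i ∈ A
    · simp [merge, hi, congrFun h1 ⟨i, hi⟩]
    · simp [merge, hi, congrFun h2 ⟨i, hi⟩]

lemma ghz_merge (A : Finset ι) (c1 c2 : ℂ) (a : {i // i ∈ A} → Fin 2)
    (b : {i // i ∉ A} → Fin 2) :
    ghz c1 c2 (merge A a b)
      = if (a = fun _ => 0) ∧ (b = fun _ => 0) then c1
        else if (a = fun _ => 1) ∧ (b = fun _ => 1) then c2 else 0 := by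
  simp [ghz, merge_eq_const]

def dGHZ (c1 c2 : ℂ) {A : Finset ι} : ({i // i ∈ A} → Fin 2) → ℝ :=
  fun a => if a = fun _ => 0 then Complex.normSq c1
    else if a = fun _ => 1 then Complex.normSq c2 else 0

lemma rdm_ghz (c1 c2 : ℂ) (A : Finset ι) (hA : A.Nonempty) (hA' : A ≠ Finset.univ) :
    rdm (ghz c1 c2) A
      = fun a a' => if a = a' then (dGHZ c1 c2 a : ℂ) else 0 := by
  haveI hAne : Nonempty {i // i ∈ A} := ⟨⟨hA.choose, hA.choose_spec⟩⟩
  have hcompl : ∃ i, i ∉ A := by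
    by_contra hc
    push_neg at hc
    exact hA' (Finset.eq_univ_iff_forall.2 hc)
  haveI hBne : Nonempty {i // i ∉ A} := ⟨⟨hcompl.choose, hcompl.choose_spec⟩⟩
  funext a a'
  have hterm : ∀ b : {i // i ∉ A} → Fin 2,
      ghz c1 c2 (merge A a b) * star (ghz c1 c2 (merge A a' b))
        = if (a = fun _ => 0) ∧ (a' = fun _ => 0) ∧ (b = fun _ => 0)
            then (Complex.normSq c1 : ℂ)
          else if (a = fun _ => 1) ∧ (a' = fun _ => 1) ∧ (b = fun _ => 1)
            then (Complex.normSq c2 : ℂ) else 0 := by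
    intro b
    rw [ghz_merge, ghz_merge]
    have hb : (fun _ : {i // i ∉ A} => (0 : Fin 2)) ≠ fun _ => 1 := const_ne_const
    have ha : (fun _ : {i // i ∈ A} => (0 : Fin 2)) ≠ fun _ => 1 := const_ne_const
    split_ifs <;> simp_all [RCLike.star_def, Complex.mul_conj]
  have e1 := const_ne_const (α := {i // i ∈ A})
  have e2 := const_ne_const (α := {i // i ∉ A})
  rw [rdm, Finset.sum_congr rfl fun b _ => hterm b]
  by_cases h00 : (a = fun _ => 0) ∧ (a' = fun _ => 0)
  · have hne1 : ¬ (a = fun _ => 1) := h00.1 ▸ const_ne_const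
    simp [h00, hne1, Finset.sum_ite_eq', dGHZ, h00.1, e1, e2, Ne.symm e1, Ne.symm e2]
  · by_cases h11 : (a = fun _ => 1) ∧ (a' = fun _ => 1)
    · have hne0 : ¬ (a = fun _ => 0) := fun h => const_ne_const (h ▸ h11.1)
      simp [h11, hne0, Finset.sum_ite_eq', dGHZ, e1, e2, Ne.symm e1, Ne.symm e2]
    · rw [Finset.sum_eq_zero ?_]
      · by_cases haa : a = a'
        · rw [if_pos haa]
          have h0 : ¬ (a = fun _ => 0) := fun h => h00 ⟨h, haa ▸ h⟩
          have h1 : ¬ (a = fun _ => 1) := fun h => h11 ⟨h, haa ▸ h⟩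
          simp [dGHZ, h0, h1]
        · rw [if_neg haa]
      · intro b _
        rw [if_neg (fun h => h00 ⟨h.1, h.2.1⟩), if_neg (fun h => h11 ⟨h.1, h.2.1⟩)]

lemma sup'_dGHZ (c1 c2 : ℂ) (A : Finset ι) [Nonempty {i // i ∈ A}] :
    Finset.univ.sup' Finset.univ_nonempty (dGHZ c1 c2 (A := A))
      = max (Complex.normSq c1) (Complex.normSq c2) := by
  apply le_antisymm
  · apply Finset.sup'_le
    intro a _
    unfold dGHZ
    split_ifs
    · exact le_max_left _ _
    · exact le_max_right _ _
    · exact le_trans (Complex.normSq_nonneg c1) (le_max_left _ _)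
  · apply max_le
    · have := Finset.le_sup' (dGHZ c1 c2 (A := A)) (Finset.mem_univ (fun _ => 0))
      refine le_trans (le_of_eq ?_) this
      simp [dGHZ]
    · have := Finset.le_sup' (dGHZ c1 c2 (A := A)) (Finset.mem_univ (fun _ => 1))
      refine le_trans (le_of_eq ?_) this
      simp [dGHZ, (const_ne_const (α := {i // i ∈ A})).symm]

lemma GGM_ghz (c1 c2 : ℂ) (hcard : 2 ≤ Fintype.card ι) :
    GGM (ghz c1 c2 : PureState ι)
      = 1 - max (Complex.normSq c1) (Complex.normSq c2) := by
  haveI : Nonempty ι := Fintype.card_pos_iff.mp (by omega)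
  have i0 := Classical.arbitrary ι
  haveI hne : Nonempty {A : Finset ι // A.Nonempty ∧ A ≠ Finset.univ} := by
    refine ⟨⟨{i0}, Finset.singleton_nonempty i0, ?_⟩⟩
    intro h
    have := Finset.card_univ (α := ι)
    rw [← h] at this
    simp at this
    omega
  have hval : ∀ A : {A : Finset ι // A.Nonempty ∧ A ≠ Finset.univ},
      maxEig (rdm (ghz c1 c2) A.1)
        = max (Complex.normSq c1) (Complex.normSq c2) := by
    rintro ⟨A, hA, hA'⟩
    haveI : Nonempty {i // i ∈ A} := ⟨⟨hA.choose, hA.choose_spec⟩⟩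
    rw [rdm_ghz c1 c2 A hA hA', maxEig_diag, sup'_dGHZ]
  rw [GGM, iSup_congr hval, ciSup_const]

lemma nsq_ghz [Nonempty ι] (c1 c2 : ℂ) :
    nsq (ghz c1 c2 : PureState ι) = Complex.normSq c1 + Complex.normSq c2 := by
  have h : ∀ x : ι → Fin 2, Complex.normSq (ghz c1 c2 x)
      = (if x = fun _ => 0 then Complex.normSq c1 else 0)
        + (if x = fun _ => 1 then Complex.normSq c2 else 0) := by
    intro x
    have e := const_ne_const (α := ι)
    unfold ghz
    by_cases h0 : x = fun _ => 0
    · have h1 : ¬ (x = fun _ => 1) := h0 ▸ const_ne_const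
      simp [h0, h1, e, Ne.symm e]
    · by_cases h1 : x = fun _ => 1 <;> simp [h0, h1, e, Ne.symm e]
  rw [nsq, Finset.sum_congr rfl fun x _ => h x, Finset.sum_add_distrib]
  simp [Finset.sum_ite_eq']

lemma normalize_ghz (c1 c2 : ℂ) :
    normalize (ghz c1 c2 : PureState ι)
      = ghz (c1 / (Real.sqrt (nsq (ghz c1 c2 : PureState ι)) : ℂ))
          (c2 / (Real.sqrt (nsq (ghz c1 c2 : PureState ι)) : ℂ)) := by
  funext x
  unfold normalize ghz
  split_ifs <;> simp

lemma key (c1 c2 : ℂ) (hcard : 2 ≤ Fintype.card ι) :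
    nsq (ghz c1 c2 : PureState ι) * GGM (normalize (ghz c1 c2 : PureState ι))
      = min (Complex.normSq c1) (Complex.normSq c2) := by
  haveI : Nonempty ι := Fintype.card_pos_iff.mp (by omega)
  have hs : nsq (ghz c1 c2 : PureState ι) = Complex.normSq c1 + Complex.normSq c2 :=
    nsq_ghz c1 c2
  have hnn1 := Complex.normSq_nonneg c1
  have hnn2 := Complex.normSq_nonneg c2
  rcases eq_or_lt_of_le (add_nonneg hnn1 hnn2) with h0 | h0
  · have h1 : Complex.normSq c1 = 0 := by linarith
    have h2 : Complex.normSq c2 = 0 := by linarith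
    rw [hs, h1, h2]
    simp
  · have hnsq : ∀ c : ℂ,
        Complex.normSq (c / ((Real.sqrt (nsq (ghz c1 c2 : PureState ι)) : ℝ) : ℂ))
          = Complex.normSq c / (Complex.normSq c1 + Complex.normSq c2) := by
      intro c
      rw [Complex.normSq_div, Complex.normSq_ofReal, hs,
        Real.mul_self_sqrt (le_of_lt h0)]
    rw [normalize_ghz, GGM_ghz _ _ hcard, hnsq, hnsq, hs,
      max_div_div_right (le_of_lt h0)]
    have hmm := min_add_max (Complex.normSq c1) (Complex.normSq c2)
    rw [mul_sub, mul_one, mul_div_cancel₀ _ (ne_of_gt h0)]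
    linarith

lemma collapse_ghz (r : ι) [Nonempty {i // i ≠ r}] (a1 a2 : ℂ) (ξ : Fin 2 → ℂ) :
    collapse (ghz a1 a2 : PureState ι) r ξ = ghz (ξ 0 * a1) (ξ 1 * a2) := by
  funext b
  have hext : ∀ (v c : Fin 2),
      ((fun i => if h : i = r then v else b ⟨i, h⟩) = fun _ : ι => c)
        ↔ (v = c ∧ b = fun _ => c) := by
    intro v c
    constructor
    · intro h
      refine ⟨by simpa using congrFun h r, funext fun i => ?_⟩
      have := congrFun h i.1
      simpa [i.2] using this
    · rintro ⟨rfl, h⟩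
      funext i
      by_cases hi : i = r
      · simp [hi]
      · simp [hi, congrFun h ⟨i, hi⟩]
  simp only [collapse, ghz, hext, Fin.sum_univ_two]
  norm_num
  have e := const_ne_const (α := {i // i ≠ r})
  by_cases hb0 : b = fun _ => 0
  · have hb1 : ¬ (b = fun _ => 1) := hb0 ▸ const_ne_const
    simp [hb0, hb1, e, Ne.symm e]
  · by_cases hb1 : b = fun _ => 1 <;> simp [hb0, hb1, e, Ne.symm e]

lemma arith (A B x y : ℝ) (hAB : A + B = 1) (hxy : x + y = 1) (hA : 1/2 ≤ A)
    (hy : 0 ≤ y) :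
    min (A*x) (B*y) + min (A*y) (B*x) = 1 - max A (max x y) := by
  have hBe : B = 1 - A := by linarith
  have hxe : x = 1 - y := by linarith
  subst hBe hxe
  rw [min_def, min_def, max_def, max_def]
  split_ifs <;> nlinarith


end Aux

/-- After a rank-1 projective measurement in the basis
`{cos(θ/2)|0⟩ + e^{iφ} sin(θ/2)|1⟩, -e^{-iφ} sin(θ/2)|0⟩ + cos(θ/2)|1⟩}`
on the first qubit of the `N`-qubit generalized GHZ state (with
`|a₁|² ≥ 1/2`, `|a₁|² + |a₂|² = 1`), the outcome probabilities are
`p¹ = |a₁|² cos²(θ/2) + |a₂|² sin²(θ/2)` and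
`p² = |a₁|² sin²(θ/2) + |a₂|² cos²(θ/2)`, each post-measurement state is an
`(N-1)`-qubit generalized GHZ state, and the average post-measurement GGM
equals `1 - max {|a₁|², cos²(θ/2), sin²(θ/2)}`. -/
theorem stmt4 (N : ℕ) (hN : 3 ≤ N) (a1 a2 : ℂ)
    (h : Complex.normSq a1 + Complex.normSq a2 = 1)
    (ha1 : 1 / 2 ≤ Complex.normSq a1) (θ φ : ℝ) :
    nsq (collapse (ghz a1 a2 : PureState (Fin N)) ⟨0, by omega⟩ (xiUp θ φ)) =
      Complex.normSq a1 * Real.cos (θ / 2) ^ 2 +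
        Complex.normSq a2 * Real.sin (θ / 2) ^ 2 ∧
    nsq (collapse (ghz a1 a2 : PureState (Fin N)) ⟨0, by omega⟩ (xiDn θ φ)) =
      Complex.normSq a1 * Real.sin (θ / 2) ^ 2 +
        Complex.normSq a2 * Real.cos (θ / 2) ^ 2 ∧
    collapse (ghz a1 a2 : PureState (Fin N)) ⟨0, by omega⟩ (xiUp θ φ) =
      ghz (a1 * (Real.cos (θ / 2) : ℂ))
        (a2 * Complex.exp (φ * Complex.I) * (Real.sin (θ / 2) : ℂ)) ∧
    collapse (ghz a1 a2 : PureState (Fin N)) ⟨0, by omega⟩ (xiDn θ φ) =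
      ghz (-(a1 * Complex.exp (-(φ * Complex.I))) * (Real.sin (θ / 2) : ℂ))
        (a2 * (Real.cos (θ / 2) : ℂ)) ∧
    avgGGM (ghz a1 a2 : PureState (Fin N)) ⟨0, by omega⟩ θ φ =
      1 - max (Complex.normSq a1)
        (max (Real.cos (θ / 2) ^ 2) (Real.sin (θ / 2) ^ 2)) := by
  have hr1 : ((⟨1, by omega⟩ : Fin N) : Fin N) ≠ ⟨0, by omega⟩ := by
    simp [Fin.ext_iff]
  haveI hne : Nonempty {i : Fin N // i ≠ ⟨0, by omega⟩} := ⟨⟨⟨1, by omega⟩, hr1⟩⟩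
  have hcard : 2 ≤ Fintype.card {i : Fin N // i ≠ (⟨0, by omega⟩ : Fin N)} := by
    refine Fintype.one_lt_card_iff.2 ⟨⟨⟨1, by omega⟩, by simp [Fin.ext_iff]⟩,
      ⟨⟨2, by omega⟩, by simp [Fin.ext_iff]⟩, ?_⟩
    simp [Subtype.ext_iff, Fin.ext_iff]
  have hexp : ∀ t : ℝ, Complex.normSq (Complex.exp ((t : ℂ) * Complex.I)) = 1 := by
    intro t
    rw [Complex.normSq_eq_norm_sq, Complex.norm_exp_ofReal_mul_I]
    simp
  have hup : collapse (ghz a1 a2 : PureState (Fin N)) ⟨0, by omega⟩ (xiUp θ φ) =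
      ghz (a1 * (Real.cos (θ / 2) : ℂ))
        (a2 * Complex.exp (φ * Complex.I) * (Real.sin (θ / 2) : ℂ)) := by
    rw [collapse_ghz,
      show xiUp θ φ 0 * a1 = a1 * (Real.cos (θ / 2) : ℂ) by
        simp only [xiUp, Matrix.cons_val_zero]; ring,
      show xiUp θ φ 1 * a2
          = a2 * Complex.exp (φ * Complex.I) * (Real.sin (θ / 2) : ℂ) by
        simp only [xiUp, Matrix.cons_val_one, Matrix.head_cons, Matrix.cons_val_zero]; ring]
  have hdn : collapse (ghz a1 a2 : PureState (Fin N)) ⟨0, by omega⟩ (xiDn θ φ) =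
      ghz (-(a1 * Complex.exp (-(φ * Complex.I))) * (Real.sin (θ / 2) : ℂ))
        (a2 * (Real.cos (θ / 2) : ℂ)) := by
    rw [collapse_ghz,
      show xiDn θ φ 0 * a1
          = -(a1 * Complex.exp (-(φ * Complex.I))) * (Real.sin (θ / 2) : ℂ) by
        simp only [xiDn, Matrix.cons_val_zero]; ring,
      show xiDn θ φ 1 * a2 = a2 * (Real.cos (θ / 2) : ℂ) by
        simp only [xiDn, Matrix.cons_val_one, Matrix.head_cons, Matrix.cons_val_zero]; ring]
  have hn1 : Complex.normSq (a1 * (Real.cos (θ / 2) : ℂ))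
      = Complex.normSq a1 * Real.cos (θ / 2) ^ 2 := by
    rw [Complex.normSq_mul, Complex.normSq_ofReal]; ring
  have hn2 : Complex.normSq (a2 * Complex.exp (φ * Complex.I) * (Real.sin (θ / 2) : ℂ))
      = Complex.normSq a2 * Real.sin (θ / 2) ^ 2 := by
    rw [Complex.normSq_mul, Complex.normSq_mul, Complex.normSq_ofReal, hexp φ]; ring
  have hn3 : Complex.normSq (-(a1 * Complex.exp (-(φ * Complex.I))) * (Real.sin (θ / 2) : ℂ))
      = Complex.normSq a1 * Real.sin (θ / 2) ^ 2 := by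
    have : (-(φ * Complex.I)) = ((-φ : ℝ) : ℂ) * Complex.I := by push_cast; ring
    rw [this, Complex.normSq_mul, Complex.normSq_neg, Complex.normSq_mul,
      Complex.normSq_ofReal, hexp (-φ)]
    ring
  have hn4 : Complex.normSq (a2 * (Real.cos (θ / 2) : ℂ))
      = Complex.normSq a2 * Real.cos (θ / 2) ^ 2 := by
    rw [Complex.normSq_mul, Complex.normSq_ofReal]; ring
  refine ⟨?_, ?_, hup, hdn, ?_⟩
  · rw [hup, nsq_ghz, hn1, hn2]
  · rw [hdn, nsq_ghz, hn3, hn4]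
  · rw [avgGGM, hup, hdn, key _ _ hcard, key _ _ hcard, hn1, hn2, hn3, hn4]
    exact arith _ _ _ _ h (Real.cos_sq_add_sin_sq _) ha1 (sq_nonneg _)


end QI
end
end
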